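/- Let α > 2 be a real number and w a binary word. Then w is α power-free if and only if μ(w) is α power-free. -/

import Mathlib

/-- The Thue-Morse morphism: μ(0)=01, μ(1)=10, with 0 = `false`, 1 = `true`. -/
def mu (w : List Bool) : List Bool := w.flatMap fun b => [b, !b]

/-- `u` has period `p`: u(i) = u(i+p) for all valid indices. -/
def HasPeriod (u : List Bool) (p : ℕ) : Prop :=
  ∀ i, i + p < u.length → u.getD i false = u.getD (i + p) false

/-- `w` is α power-free: no subword `u` of `w` has a period `p ≥ 1` with |u|/p ≥ α. -/
def PowerFree (α : ℝ) (w : List Bool) : Prop :=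
  ∀ u p, u <:+: w → 1 ≤ p → HasPeriod u p → (u.length : ℝ) < α * p

lemma bnot_inj' {x y : Bool} (h : (!x) = (!y)) : x = y := by
  cases x <;> cases y <;> simp_all

lemma beq_flip {x y : Bool} (h : x = !y) : y = !x := by
  cases x <;> cases y <;> simp_all

lemma bself {x : Bool} (h : x = !x) : False := by
  cases x <;> simp_all

lemma mu_length (w : List Bool) : (mu w).length = 2 * w.length := by
  induction w with
  | nil => rfl
  | cons b t ih => simp [mu] at ih ⊢; omega

lemma mu_getD_even (w : List Bool) (i : ℕ) (h : i < w.length) :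
    (mu w).getD (2*i) false = w.getD i false := by
  induction w generalizing i with
  | nil => simp at h
  | cons b t ih =>
    match i with
    | 0 => rfl
    | (k+1) =>
      have : 2*(k+1) = (2*k)+1+1 := by omega
      rw [this]
      simpa [mu] using ih k (by simpa using Nat.lt_of_succ_lt_succ h)

lemma mu_getD_odd (w : List Bool) (i : ℕ) (h : i < w.length) :
    (mu w).getD (2*i+1) false = !(w.getD i false) := by
  induction w generalizing i with
  | nil => simp at h
  | cons b t ih =>
    match i with
    | 0 => rfl
    | (k+1) =>
      have : 2*(k+1)+1 = (2*k+1)+1+1 := by omega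
      rw [this]
      simpa [mu] using ih k (by simpa using Nat.lt_of_succ_lt_succ h)

lemma mu_P (w : List Bool) (s : ℕ) (h : 2*s+1 < (mu w).length) :
    (mu w).getD (2*s+1) false = !((mu w).getD (2*s) false) := by
  have hs : s < w.length := by rw [mu_length] at h; omega
  rw [mu_getD_even _ _ hs, mu_getD_odd _ _ hs]

lemma mu_append (a b : List Bool) : mu (a ++ b) = mu a ++ mu b := by
  simp [mu]

lemma mu_infix {u w : List Bool} (h : u <:+: w) : mu u <:+: mu w := by
  obtain ⟨s, t, rfl⟩ := h
  exact ⟨mu s, mu t, by rw [← mu_append, ← mu_append]⟩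

lemma mu_hasPeriod {u : List Bool} {p : ℕ} (h : HasPeriod u p) : HasPeriod (mu u) (2*p) := by
  intro k hk
  rw [mu_length] at hk
  rcases Nat.even_or_odd k with ⟨i, hi⟩ | ⟨i, hi⟩
  · have e1 : k = 2*i := by omega
    have e2 : 2*i + 2*p = 2*(i+p) := by omega
    rw [e1, e2, mu_getD_even _ _ (by omega), mu_getD_even _ _ (by omega)]
    exact h i (by omega)
  · have e1 : k = 2*i+1 := by omega
    have e2 : 2*i+1 + 2*p = 2*(i+p)+1 := by omega
    rw [e1, e2, mu_getD_odd _ _ (by omega), mu_getD_odd _ _ (by omega)]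
    rw [h i (by omega)]

lemma infix_getD {u w : List Bool} (h : u <:+: w) :
    ∃ j, j + u.length ≤ w.length ∧ ∀ i < u.length, u.getD i false = w.getD (j+i) false := by
  obtain ⟨s, t, rfl⟩ := h
  refine ⟨s.length, by simp, fun i hi => ?_⟩
  rw [List.getD_append _ _ _ _ (by simp [hi])]
  rw [List.getD_append_right _ _ _ _ (by omega)]
  have : s.length + i - s.length = i := by omega
  rw [this]

lemma slice_infix (w : List Bool) (j n : ℕ) (h : j + n ≤ w.length) :
    ((w.drop j).take n) <:+: w ∧ ((w.drop j).take n).length = n ∧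
      ∀ i < n, ((w.drop j).take n).getD i false = w.getD (j+i) false := by
  refine ⟨((w.drop j).take_prefix n).isInfix.trans (w.drop_suffix j).isInfix, by simp; omega,
    fun i hi => ?_⟩
  have h1 : i < ((w.drop j).take n).length := by simp; omega
  rw [List.getD_eq_getElem _ _ h1, List.getD_eq_getElem _ _ (by omega)]
  simp [List.getElem_take, List.getElem_drop]

theorem shur (α : ℝ) (hα : 2 < α) (w : List Bool) :
    PowerFree α w ↔ PowerFree α (mu w) := by
  constructor
  · -- hard direction
    intro hw u p hinf hp hper
    by_contra hcon
    push_neg at hcon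
    obtain ⟨j, hjn, hsl⟩ := infix_getD hinf
    rw [mu_length] at hjn
    set n := u.length with hnu
    set N := w.length with hNw
    have hppos : (0:ℝ) < (p:ℕ) := by exact_mod_cast hp
    have h2pn : 2 * p < n := by
      have : (2:ℝ) * p < α * p := by nlinarith
      have h2 : ((2*p : ℕ):ℝ) < (n:ℝ) := by push_cast; linarith
      exact_mod_cast h2
    have per : ∀ m, j ≤ m → m + p < j + n →
        (mu w).getD m false = (mu w).getD (m+p) false := by
      intro m h1 h2
      have hh := hper (m-j) (by omega)
      rw [hsl (m-j) (by omega), hsl (m-j+p) (by omega)] at hh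
      have e1 : j + (m-j) = m := by omega
      have e2 : j + (m-j+p) = m+p := by omega
      rwa [e1, e2] at hh
    have hlen2N : (mu w).length = 2*N := mu_length w
    rcases Nat.even_or_odd p with ⟨q, hq⟩ | ⟨q1, hq⟩
    · -- p even, p = q + q
      have hq1 : 1 ≤ q := by omega
      set j0 := j - j % 2 with hj0
      set e0 := j + n + (j + n) % 2 with he0
      have hj0e : j0 % 2 = 0 := by omega
      have he0e : e0 % 2 = 0 := by omega
      have he0N : e0 ≤ 2*N := by omega
      have per0 : ∀ m, j0 ≤ m → m + p < e0 →
          (mu w).getD m false = (mu w).getD (m+p) false := by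
        intro m h1 h2
        by_cases hm1 : m < j
        · -- m = j - 1, j odd
          have hjodd : j % 2 = 1 := by omega
          have hmj : m = j - 1 := by omega
          have e1 : 2*((j-1)/2) = j - 1 := by omega
          have e2 : 2*((j-1)/2)+1 = j := by omega
          have hP1 : (mu w).getD j false = !((mu w).getD (j-1) false) := by
            have hh := mu_P w ((j-1)/2) (by omega)
            rwa [e2, e1] at hh
          have e3 : 2*((j+p-1)/2) = j+p-1 := by omega
          have e4 : 2*((j+p-1)/2)+1 = j+p := by omega
          have hP2 : (mu w).getD (j+p) false = !((mu w).getD (j+p-1) false) := by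
            have hh := mu_P w ((j+p-1)/2) (by omega)
            rwa [e4, e3] at hh
          have hper1 : (mu w).getD j false = (mu w).getD (j+p) false :=
            per j (le_refl _) (by omega)
          rw [hper1, hP2] at hP1
          have hmp : j - 1 + p = j + p - 1 := by omega
          rw [hmj, hmp]
          exact (bnot_inj' hP1).symm
        · by_cases hm2 : j + n ≤ m + p
          · -- m + p = j + n, j + n odd
            have hmpe : m + p = j + n := by omega
            have hodd : (j+n) % 2 = 1 := by omega
            have e1 : 2*((j+n-1)/2) = j+n-1 := by omega
            have e2 : 2*((j+n-1)/2)+1 = j+n := by omega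
            have hP1 : (mu w).getD (j+n) false = !((mu w).getD (j+n-1) false) := by
              have hh := mu_P w ((j+n-1)/2) (by omega)
              rwa [e2, e1] at hh
            have e3 : 2*((j+n-1-p)/2) = j+n-1-p := by omega
            have e4 : 2*((j+n-1-p)/2)+1 = j+n-p := by omega
            have hP2 : (mu w).getD (j+n-p) false = !((mu w).getD (j+n-1-p) false) := by
              have hh := mu_P w ((j+n-1-p)/2) (by omega)
              rwa [e4, e3] at hh
            have hper1 : (mu w).getD (j+n-1-p) false = (mu w).getD (j+n-1) false := by
              have hh := per (j+n-1-p) (by omega) (by omega)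
              have e5 : j+n-1-p+p = j+n-1 := by omega
              rwa [e5] at hh
            have hm : m = j+n-p := by omega
            have e6 : j+n-p+p = j+n := by omega
            rw [hm, e6, hP1, ← hper1, ← hP2]
          · exact per m (by omega) (by omega)
      set n0 := e0 - j0 with hn0
      have hdiv : j0/2 + n0/2 ≤ N := by omega
      obtain ⟨hinf', hlen', hgd'⟩ := slice_infix w (j0/2) (n0/2) hdiv
      have hper' : HasPeriod ((w.drop (j0/2)).take (n0/2)) q := by
        intro i hi
        rw [hlen'] at hi
        rw [hgd' i (by omega), hgd' (i+q) (by omega)]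
        have eb : w.getD (j0/2 + i) false = (mu w).getD (2*(j0/2+i)) false :=
          (mu_getD_even w _ (by omega)).symm
        have ec : w.getD (j0/2 + (i+q)) false = (mu w).getD (2*(j0/2+(i+q))) false :=
          (mu_getD_even w _ (by omega)).symm
        rw [eb, ec]
        have hh := per0 (2*(j0/2+i)) (by omega) (by omega)
        have ee : 2*(j0/2+i)+p = 2*(j0/2+(i+q)) := by omega
        rwa [ee] at hh
      have hfinal := hw _ q hinf' hq1 hper'
      rw [hlen'] at hfinal
      have h1 : n ≤ 2 * (n0/2) := by omega
      have h2 : (n:ℝ) ≤ 2 * ((n0/2 : ℕ):ℝ) := by exact_mod_cast h1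
      have h3 : (p:ℝ) = 2 * (q:ℝ) := by
        have : p = 2*q := by omega
        exact_mod_cast this
      rw [h3] at hcon
      have h4 : α * (2 * (q:ℝ)) = 2 * (α * q) := by ring
      linarith
    · -- p odd, p = 2*q1 + 1
      have hn3 : 2*p + 1 ≤ n := by omega
      by_cases hq0 : q1 = 0
      · -- p = 1
        have hp1 : p = 1 := by omega
        have h1 : (mu w).getD j false = (mu w).getD (j+1) false := by
          have hh := per j (le_refl _) (by omega); rwa [hp1] at hh
        have h2 : (mu w).getD (j+1) false = (mu w).getD (j+2) false := by
          have hh := per (j+1) (by omega) (by omega); rwa [hp1] at hh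
        rcases Nat.even_or_odd j with ⟨s, hs⟩ | ⟨s, hs⟩
        · have e1 : 2*s = j := by omega
          have e2 : 2*s+1 = j+1 := by omega
          have hh := mu_P w s (by rw [hlen2N]; omega)
          rw [e2, e1, ← h1] at hh
          exact bself hh
        · have e1 : 2*(s+1) = j+1 := by omega
          have e2 : 2*(s+1)+1 = j+2 := by omega
          have hh := mu_P w (s+1) (by rw [hlen2N]; omega)
          rw [e2, e1, ← h2] at hh
          exact bself hh
      · -- p = 2*q1+1, q1 ≥ 1
        have hq1 : 1 ≤ q1 := by omega
        have relA : ∀ s, j ≤ 2*s → 2*s + p < j + n →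
            w.getD (s+q1) false = !(w.getD s false) := by
          intro s h1 h2
          have hv1 : (mu w).getD (2*s) false = w.getD s false :=
            mu_getD_even w s (by omega)
          have hv2 : (mu w).getD (2*(s+q1)+1) false = !(w.getD (s+q1) false) :=
            mu_getD_odd w (s+q1) (by omega)
          have hpe := per (2*s) h1 h2
          have e1 : 2*s + p = 2*(s+q1)+1 := by omega
          rw [e1, hv1, hv2] at hpe
          exact beq_flip hpe
        have relB : ∀ s, j ≤ 2*s+1 → 2*s+1 + p < j + n →
            w.getD (s+q1+1) false = !(w.getD s false) := by
          intro s h1 h2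
          have hv1 : (mu w).getD (2*s+1) false = !(w.getD s false) :=
            mu_getD_odd w s (by omega)
          have hv2 : (mu w).getD (2*(s+q1+1)) false = w.getD (s+q1+1) false :=
            mu_getD_even w (s+q1+1) (by omega)
          have hpe := per (2*s+1) h1 h2
          have e1 : 2*s+1 + p = 2*(s+q1+1) := by omega
          rw [e1, hv1, hv2] at hpe
          exact hpe.symm
        have eqcons : ∀ s, j ≤ 2*s+1 → 2*s+2+p < j + n →
            w.getD s false = w.getD (s+1) false := by
          intro s h1 h2
          have hB := relB s h1 (by omega)
          have hA := relA (s+1) (by omega) (by omega)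
          have e1 : s+1+q1 = s+q1+1 := by omega
          rw [e1, hB] at hA
          exact bnot_inj' hA
        have const : ∀ k s, j ≤ 2*s+1 → 2*s+2*k+p+1 ≤ j + n →
            w.getD s false = w.getD (s+k) false := by
          intro k
          induction k with
          | zero => intro s _ _; rfl
          | succ m ih =>
            intro s h1 h2
            have h3 : w.getD s false = w.getD (s+m) false := ih s h1 (by omega)
            have h4 : w.getD (s+m) false = w.getD (s+m+1) false :=
              eqcons (s+m) (by omega) (by omega)
            have e : s + (m+1) = s+m+1 := by omega
            rw [e, h3, h4]
        have hA := relA ((j+1)/2) (by omega) (by omega)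
        have hC := const q1 ((j+1)/2) (by omega) (by omega)
        rw [← hC] at hA
        exact bself hA
  · -- easy direction
    intro hmu u p hinf hp hper
    have h2 := hmu (mu u) (2*p) (mu_infix hinf) (by omega) (mu_hasPeriod hper)
    rw [mu_length] at h2
    have h3 : ((2 * u.length : ℕ):ℝ) < α * ((2*p : ℕ):ℝ) := by exact_mod_cast h2
    push_cast at h3
    nlinarith
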